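/- In the set algebra over an infinite set E (the graded algebra ⊕_n K^{[E]^n} with product (fg)(A) = Σ_{A = A₁ ⊎ A₂} f(A₁)g(A₂)), the product of two R-invariant functions is R-invariant, for any relational structure R on E; hence the R-invariant functions form a graded subalgebra. -/

import Mathlib

/-- A relational structure on a base set (type) `E`: a family of finitary relations on `E`. -/
structure RelStruct (E : Type*) where
  ι : Type*
  arity : ι → ℕ
  rel : ∀ i : ι, (Fin (arity i) → E) → Prop

/-- The substructures induced by `R` on `A` and `B` are isomorphic: there is a bijection
`A ≃ B` transporting every relation of `R` restricted to `A` onto its restriction to `B`. -/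
def RelStruct.Iso {E : Type*} (R : RelStruct E) (A B : Set E) : Prop :=
  ∃ e : A ≃ B, ∀ (i : R.ι) (v : Fin (R.arity i) → A),
    R.rel i (fun j => (v j : E)) ↔ R.rel i (fun j => (e (v j) : E))

/-- `F` is a monomorphic part of `R`: any two finite subsets of the same cardinality which
agree outside `F` induce isomorphic substructures. -/
def IsMonoPart {E : Type*} (R : RelStruct E) (F : Set E) : Prop :=
  ∀ A A' : Set E, A.Finite → A'.Finite → A.ncard = A'.ncard → A \ F = A' \ F →
    R.Iso A A'

/-- A collection `P` of subsets of `E` (a set partition of `E`) is a monomorphic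
decomposition of `R` if any two finite subsets meeting every block in the same number of
elements induce isomorphic substructures. -/
def IsMonoDecomp {E : Type*} (R : RelStruct E) (P : Set (Set E)) : Prop :=
  ∀ A A' : Set E, A.Finite → A'.Finite →
    (∀ p ∈ P, (A ∩ p).ncard = (A' ∩ p).ncard) → R.Iso A A'

/-- Indexed variant: a family `(B x)_{x ∈ X}` of subsets of `E` is a monomorphic
decomposition of `R` if any two finite subsets meeting every block in the same number of
elements induce isomorphic substructures. -/
def IsMonoDecompFam {E : Type*} {X : Type*} (R : RelStruct E) (B : X → Set E) : Prop :=
  ∀ A A' : Set E, A.Finite → A'.Finite →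
    (∀ x : X, (A ∩ B x).ncard = (A' ∩ B x).ncard) → R.Iso A A'

/-- `f : Set E → K`, viewed as a map on the `m`-element subsets of `E`, is `R`-invariant if it
takes the same value on any two `m`-element subsets inducing isomorphic substructures. -/
def RInvariant {E K : Type*} (R : RelStruct E) (m : ℕ) (f : Set E → K) : Prop :=
  ∀ A A' : Set E, A.Finite → A'.Finite → A.ncard = m → A'.ncard = m →
    R.Iso A A' → f A = f A'

/-- The product in the set algebra of `f` (of degree `m`) and `g`, evaluated on a set `A`:
`(fg)(A) = Σ_{A = A₁ ⊎ A₂, |A₁| = m} f(A₁)·g(A₂)`. -/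
noncomputable def setAlgebraMul {E K : Type*} [Field K] (m : ℕ) (f g : Set E → K)
    (A : Set E) : K :=
  ∑ᶠ B ∈ {B : Set E | B ⊆ A ∧ B.ncard = m}, f B * g (A \ B)

/-- in the set algebra over an infinite set `E` with coefficients in a field `K`
of characteristic `0`, the product of an `R`-invariant function of degree `m` and an
`R`-invariant function of degree `n` is an `R`-invariant function of degree `m + n`, for any
relational structure `R` on `E`. -/
theorem setAlgebraMul_invariant {E K : Type*} [Infinite E] [Field K] [CharZero K]
    (R : RelStruct E) (m n : ℕ) (f g : Set E → K)
    (hf : RInvariant R m f) (hg : RInvariant R n g) :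
    RInvariant R (m + n) (setAlgebraMul m f g) := by
  rintro A A' hA hA' hcard hcard' ⟨e, he⟩
  classical
  set φ : Set E → Set E := fun B => Subtype.val '' (e '' (Subtype.val ⁻¹' B)) with hφdef
  set ψ : Set E → Set E := fun B => Subtype.val '' (e.symm '' (Subtype.val ⁻¹' B)) with hψdef
  have hφsub : ∀ B, φ B ⊆ A' := by
    rintro B x ⟨y, -, rfl⟩; exact y.2
  have hψsub : ∀ B, ψ B ⊆ A := by
    rintro B x ⟨y, -, rfl⟩; exact y.2
  have hψφ : ∀ B, B ⊆ A → ψ (φ B) = B := by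
    intro B hB
    simp only [hφdef, hψdef, Set.preimage_image_eq _ Subtype.val_injective,
      Equiv.symm_image_image]
    rw [Subtype.image_preimage_coe]
    exact Set.inter_eq_self_of_subset_right hB
  have hφψ : ∀ B, B ⊆ A' → φ (ψ B) = B := by
    intro B hB
    simp only [hφdef, hψdef, Set.preimage_image_eq _ Subtype.val_injective,
      Equiv.image_symm_image]
    rw [Subtype.image_preimage_coe]
    exact Set.inter_eq_self_of_subset_right hB
  have hncard : ∀ B, B ⊆ A → (φ B).ncard = B.ncard := by
    intro B hB
    have h1 : (φ B).ncard = (Subtype.val ⁻¹' B : Set A).ncard := by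
      rw [hφdef]
      rw [Set.ncard_image_of_injective _ Subtype.val_injective,
        Set.ncard_image_of_injective _ e.injective]
    have h2 : B = Subtype.val '' (Subtype.val ⁻¹' B : Set A) := by
      rw [Subtype.image_preimage_coe]
      exact (Set.inter_eq_self_of_subset_right hB).symm
    rw [h1]
    conv_rhs => rw [h2]
    rw [Set.ncard_image_of_injective _ Subtype.val_injective]
  have hdiff : ∀ B, B ⊆ A → A' \ φ B = φ (A \ B) := by
    intro B hB
    ext x
    simp only [hφdef, Set.mem_diff, Set.mem_image, Set.mem_preimage]
    constructor
    · rintro ⟨hx, hnx⟩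
      refine ⟨⟨x, hx⟩, ⟨e.symm ⟨x, hx⟩, ⟨(e.symm ⟨x, hx⟩).2, ?_⟩, by simp⟩, rfl⟩
      intro hmem
      exact hnx ⟨⟨x, hx⟩, ⟨e.symm ⟨x, hx⟩, hmem, by simp⟩, rfl⟩
    · rintro ⟨y, ⟨z, ⟨-, hz⟩, rfl⟩, rfl⟩
      refine ⟨(e z).2, ?_⟩
      rintro ⟨y', ⟨w, hw, rfl⟩, hval⟩
      have hwz : w = z := e.injective (Subtype.val_injective hval)
      exact hz (hwz ▸ hw)
  have hiso : ∀ B, B ⊆ A → R.Iso B (φ B) := by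
    intro B hB
    have hmem : ∀ x : B, (e ⟨x.1, hB x.2⟩ : E) ∈ φ B := by
      intro x
      exact ⟨e ⟨x.1, hB x.2⟩, ⟨⟨x.1, hB x.2⟩, x.2, rfl⟩, rfl⟩
    have hbij : Function.Bijective (fun x : B => (⟨e ⟨x.1, hB x.2⟩, hmem x⟩ : φ B)) := by
      constructor
      · intro x y hxy
        simp only [Subtype.mk.injEq] at hxy
        have h2 := e.injective (Subtype.ext hxy)
        simp only [Subtype.mk.injEq] at h2
        exact Subtype.ext h2
      · rintro ⟨z, y, ⟨w, hw, rfl⟩, rfl⟩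
        exact ⟨⟨w.1, hw⟩, rfl⟩
    refine ⟨Equiv.ofBijective _ hbij, ?_⟩
    intro i v
    have := he i (fun j => ⟨(v j).1, hB (v j).2⟩)
    simpa using this
  have hAcard : A.ncard = m + n := hcard
  -- main computation
  show setAlgebraMul m f g A = setAlgebraMul m f g A'
  unfold setAlgebraMul
  refine finsum_mem_eq_of_bijOn φ ⟨?_, ?_, ?_⟩ ?_
  · rintro B ⟨hB, hBm⟩
    exact ⟨hφsub B, by rw [hncard B hB, hBm]⟩
  · rintro B ⟨hB, -⟩ C ⟨hC, -⟩ hφeq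
    rw [← hψφ B hB, ← hψφ C hC, hφeq]
  · rintro B ⟨hB, hBm⟩
    refine ⟨ψ B, ⟨hψsub B, ?_⟩, hφψ B hB⟩
    have := hncard (ψ B) (hψsub B)
    rw [hφψ B hB] at this
    rw [← this, hBm]
  · rintro B ⟨hB, hBm⟩
    have hBfin : B.Finite := hA.subset hB
    have hφBfin : (φ B).Finite := hA'.subset (hφsub B)
    have h1 : f B = f (φ B) :=
      hf B (φ B) hBfin hφBfin hBm (by rw [hncard B hB, hBm]) (hiso B hB)
    have hABfin : (A \ B).Finite := hA.diff
    have hABcard : (A \ B).ncard = n := by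
      rw [Set.ncard_diff hB hBfin, hAcard, hBm]; omega
    have h2 : g (A \ B) = g (A' \ φ B) := by
      rw [hdiff B hB]
      exact hg (A \ B) (φ (A \ B)) hABfin (hA'.subset (hφsub _)) hABcard
        (by rw [hncard _ Set.diff_subset, hABcard]) (hiso _ Set.diff_subset)
    rw [h1, h2]
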